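/- (Lemma 5.1, generator identity.) Let θ_i ∈ ℝ for i ∈ ℤ with every Z(θ_i) convergent, let μ^{(θ̲)} be the product probability measure on ℤ^ℤ with i-th marginal μ^{(θ_i)}, and let φ : ℤ^ℤ → ℝ be bounded and measurable, depending only on the coordinates ω_l, …, ω_r for some integers l ≤ r. Then ∑_{i=l−1}^{r} ∫ (r(ω_i)+r(−ω_{i+1}))·(φ(ω^{(i,i+1)}) − φ(ω)) dμ^{(θ̲)}(ω) = ∑_{i=l−1}^{r−1} (e^{θ_i} − e^{θ_{i+1}})·( ∫ φ(ω^{(i+1,+)}) dμ^{(θ̲)}(ω) − ∫ φ dμ^{(θ̲)} ) + ∑_{i=l+1}^{r+1} (e^{−θ_i} − e^{−θ_{i−1}})·( ∫ φ(ω^{(i−1,−)}) dμ^{(θ̲)}(ω) − ∫ φ dμ^{(θ̲)} ), all integrands being integrable. -/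

import Mathlib

open Real MeasureTheory
open scoped ENNReal NNReal

/-- The generalized factorial `r(z)! := ∏_{y=1}^{|z|} r(y)`. -/
noncomputable def rfact (r : ℤ → ℝ) (z : ℤ) : ℝ :=
  ∏ y ∈ Finset.range z.natAbs, r (y + 1)

/-- The partition function `Z(θ) := ∑_{z ∈ ℤ} e^{θ z} / r(z)!`. -/
noncomputable def Zfun (r : ℤ → ℝ) (θ : ℝ) : ℝ :=
  ∑' z : ℤ, Real.exp (θ * z) / rfact r z

/-- The single-site probability mass function `μ^{(θ)}(z) := e^{θ z} / (Z(θ) r(z)!)`. -/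
noncomputable def mu (r : ℤ → ℝ) (θ : ℝ) (z : ℤ) : ℝ :=
  Real.exp (θ * z) / (Zfun r θ * rfact r z)

/-- `ω^{(i,i+1)}`: a brick is laid on the column over `(i, i+1)`; coordinate `i`
decreases by one and coordinate `i+1` increases by one. -/
def brickCfg (ω : ℤ → ℤ) (i : ℤ) : ℤ → ℤ :=
  fun j => if j = i then ω i - 1 else if j = i + 1 then ω (i + 1) + 1 else ω j

/-- `ω^{(i,+)}`: only coordinate `i` is changed, to `ω i + 1`. -/
def upCfg (ω : ℤ → ℤ) (i : ℤ) : ℤ → ℤ := Function.update ω i (ω i + 1)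

/-- `ω^{(i,-)}`: only coordinate `i` is changed, to `ω i - 1`. -/
def downCfg (ω : ℤ → ℤ) (i : ℤ) : ℤ → ℤ := Function.update ω i (ω i - 1)

/-- `IsProductMeasure r η P` means: `P` is the product probability measure on `ℤ^ℤ`
whose `i`-th marginal is the single-site measure `μ^{(η i)}`, characterized by its
values on cylinder sets. -/
def IsProductMeasure (r : ℤ → ℝ) (η : ℤ → ℝ) (P : Measure (ℤ → ℤ)) : Prop :=
  IsProbabilityMeasure P ∧
    ∀ (s : Finset ℤ) (c : ℤ → ℤ),
      P {ω : ℤ → ℤ | ∀ i ∈ s, ω i = c i} = ∏ i ∈ s, ENNReal.ofReal (mu r (η i) (c i))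

namespace GenId

/-! ### Elementary facts about `rfact` and `mu` -/

lemma rfact_pos {r : ℤ → ℝ} (hpos : ∀ z : ℤ, 0 < r z) (z : ℤ) : 0 < rfact r z :=
  Finset.prod_pos fun _ _ => hpos _

lemma rfact_succ {r : ℤ → ℝ} (hpos : ∀ z : ℤ, 0 < r z)
    (hrel : ∀ z : ℤ, r z * r (-z + 1) = 1) (z : ℤ) :
    rfact r z = rfact r (z - 1) * r z := by
  rcases le_or_gt z 0 with h | h
  · have h1 : (z - 1).natAbs = z.natAbs + 1 := by omega
    have h2 : ((z.natAbs : ℤ) + 1) = -z + 1 := by omega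
    have key : rfact r (z - 1) = rfact r z * r (-z + 1) := by
      rw [rfact, h1, Finset.prod_range_succ, ← rfact, h2]
    rw [key, mul_assoc]
    have : r (-z + 1) * r z = 1 := by rw [mul_comm]; exact hrel z
    rw [this, mul_one]
  · have h1 : z.natAbs = (z - 1).natAbs + 1 := by omega
    have h2 : (((z - 1).natAbs : ℤ) + 1) = z := by omega
    rw [rfact, h1, Finset.prod_range_succ, ← rfact, h2]

lemma mu_shift {r : ℤ → ℝ} (hpos : ∀ z : ℤ, 0 < r z)
    (hrel : ∀ z : ℤ, r z * r (-z + 1) = 1) (θ : ℝ) (z : ℤ) :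
    mu r θ z * r z = Real.exp θ * mu r θ (z - 1) := by
  have hr : rfact r z = rfact r (z - 1) * r z := rfact_succ hpos hrel z
  have he : Real.exp (θ * z) = Real.exp θ * Real.exp (θ * ((z : ℝ) - 1)) := by
    rw [← Real.exp_add]; ring_nf
  unfold mu
  rw [hr]
  push_cast
  rw [he]
  have h1 : r z ≠ 0 := (hpos z).ne'
  have h2 : rfact r (z - 1) ≠ 0 := (rfact_pos hpos _).ne'
  rcases eq_or_ne (Zfun r θ) 0 with hZ | hZ
  · simp [hZ]
  · field_simp

lemma mu_up' {r : ℤ → ℝ} (hpos : ∀ z : ℤ, 0 < r z)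
    (hrel : ∀ z : ℤ, r z * r (-z + 1) = 1) (θ : ℝ) (z : ℤ) :
    r (z + 1) * mu r θ (z + 1) = Real.exp θ * mu r θ z := by
  have h := mu_shift hpos hrel θ (z + 1)
  have e : z + 1 - 1 = z := by ring
  rw [e] at h
  linarith [h]

lemma mu_down' {r : ℤ → ℝ} (hpos : ∀ z : ℤ, 0 < r z)
    (hrel : ∀ z : ℤ, r z * r (-z + 1) = 1) (θ : ℝ) (z : ℤ) :
    r (-z + 1) * mu r θ (z - 1) = Real.exp (-θ) * mu r θ z := by
  have h := mu_shift hpos hrel θ z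
  have h2 : mu r θ z * (r z * r (-z + 1)) = Real.exp θ * (r (-z + 1) * mu r θ (z - 1)) := by
    rw [← mul_assoc, h]; ring
  rw [hrel z, mul_one] at h2
  rw [h2, ← mul_assoc, ← Real.exp_add, neg_add_cancel, Real.exp_zero, one_mul]

lemma mu_nonneg' {r : ℤ → ℝ} (hpos : ∀ z : ℤ, 0 < r z) (θ : ℝ) (z : ℤ) :
    0 ≤ mu r θ z := by
  have hZ : 0 ≤ Zfun r θ :=
    tsum_nonneg fun z => div_nonneg (Real.exp_nonneg _) (rfact_pos hpos z).le
  exact div_nonneg (Real.exp_nonneg _) (mul_nonneg hZ (rfact_pos hpos z).le)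

/-! ### Finite-sum (Abel summation) identities over `Finset.Icc` in `ℤ` -/

lemma Icc_eq_insert_top {p q : ℤ} (h : p ≤ q) :
    Finset.Icc p q = insert q (Finset.Icc p (q - 1)) := by
  ext x; simp only [Finset.mem_Icc, Finset.mem_insert]; omega

lemma sum_shift_general (p : ℤ) (f U : ℤ → ℝ) :
    ∀ q : ℤ, p ≤ q →
    ∑ i ∈ Finset.Icc p q, f i * (U (i + 1) - U i)
      = ∑ i ∈ Finset.Icc p (q - 1), (f i - f (i + 1)) * U (i + 1)
        + f q * U (q + 1) - f p * U p := by
  intro q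
  refine Int.le_induction (motive := fun q _ => ∑ i ∈ Finset.Icc p q, f i * (U (i + 1) - U i)
      = ∑ i ∈ Finset.Icc p (q - 1), (f i - f (i + 1)) * U (i + 1)
        + f q * U (q + 1) - f p * U p) ?_ ?_ q
  all_goals beta_reduce
  · have h0 : Finset.Icc p (p - 1) = ∅ := by rw [Finset.Icc_eq_empty_iff]; omega
    simp [h0, Finset.Icc_self]; ring
  · intro q hq ih
    rw [Icc_eq_insert_top (by omega : p ≤ q + 1), Finset.sum_insert (by simp)]
    have e : q + 1 - 1 = q := by ring
    rw [e, ih, Icc_eq_insert_top (by omega : p ≤ q), Finset.sum_insert (by simp)]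
    ring

lemma telescope (p : ℤ) (f : ℤ → ℝ) :
    ∀ q : ℤ, p - 1 ≤ q → ∑ i ∈ Finset.Icc p q, (f i - f (i + 1)) = f p - f (q + 1) := by
  intro q
  refine Int.le_induction (motive := fun q _ => ∑ i ∈ Finset.Icc p q, (f i - f (i + 1)) = f p - f (q + 1))
      ?_ ?_ q
  all_goals beta_reduce
  · have h0 : Finset.Icc p (p - 1) = ∅ := by rw [Finset.Icc_eq_empty_iff]; omega
    have e : p - 1 + 1 = p := by ring
    rw [h0, e]; simp
  · intro q hq ih
    rw [Icc_eq_insert_top (by omega : p ≤ q + 1), Finset.sum_insert (by simp)]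
    have e : q + 1 - 1 = q := by ring
    rw [e, ih]
    ring

lemma part1 (a b : ℤ) (hab : a ≤ b) (f U : ℤ → ℝ) (I : ℝ)
    (h1 : U (a - 1) = I) (h2 : U (b + 1) = I) :
    ∑ i ∈ Finset.Icc (a - 1) b, f i * (U (i + 1) - U i)
      = ∑ i ∈ Finset.Icc (a - 1) (b - 1), (f i - f (i + 1)) * (U (i + 1) - I) := by
  rw [sum_shift_general (a - 1) f U b (by omega), h1, h2]
  have ht : ∑ i ∈ Finset.Icc (a - 1) (b - 1), (f i - f (i + 1)) = f (a - 1) - f b := by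
    have h := telescope (a - 1) f (b - 1) (by omega)
    have e1 : b - 1 + 1 = b := by ring
    rw [e1] at h
    exact h
  calc ∑ i ∈ Finset.Icc (a - 1) (b - 1), (f i - f (i + 1)) * U (i + 1) + f b * I - f (a - 1) * I
      = ∑ i ∈ Finset.Icc (a - 1) (b - 1), (f i - f (i + 1)) * U (i + 1)
        - (∑ i ∈ Finset.Icc (a - 1) (b - 1), (f i - f (i + 1))) * I := by rw [ht]; ring
    _ = _ := by
        rw [Finset.sum_mul, ← Finset.sum_sub_distrib]
        exact Finset.sum_congr rfl fun _ _ => by ring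

lemma part2 (a b : ℤ) (hab : a ≤ b) (g D : ℤ → ℝ) (I : ℝ)
    (h1 : D (a - 1) = I) (h2 : D (b + 1) = I) :
    ∑ i ∈ Finset.Icc (a - 1) b, g (i + 1) * (D i - D (i + 1))
      = ∑ i ∈ Finset.Icc (a + 1) (b + 1), (g i - g (i - 1)) * (D (i - 1) - I) := by
  have hmap : Finset.Icc (a + 1) (b + 1) = (Finset.Icc (a - 1) (b - 1)).map
      (addRightEmbedding 2) := by
    rw [Finset.map_add_right_Icc]; ring_nf
  rw [hmap, Finset.sum_map]
  simp only [addRightEmbedding_apply]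
  have hL : ∑ i ∈ Finset.Icc (a - 1) b, g (i + 1) * (D i - D (i + 1))
      = ∑ i ∈ Finset.Icc (a - 1) b, (fun i => -g (i + 1)) i * (D (i + 1) - D i) :=
    Finset.sum_congr rfl fun _ _ => by ring
  rw [hL, sum_shift_general (a - 1) (fun i => -g (i + 1)) D b (by omega), h1, h2]
  have e3 : a - 1 + 1 = a := by ring
  have ht : ∑ i ∈ Finset.Icc (a - 1) (b - 1), (g (i + 1) - g (i + 1 + 1)) = g a - g (b + 1) := by
    have h := telescope (a - 1) (fun i => g (i + 1)) (b - 1) (by omega)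
    have e1 : b - 1 + 1 = b := by ring
    rw [e1, e3] at h
    exact h
  have ht2 : ∑ i ∈ Finset.Icc (a - 1) (b - 1), (g (i + 1 + 1) - g (i + 1)) = g (b + 1) - g a := by
    have hn : ∑ i ∈ Finset.Icc (a - 1) (b - 1), (g (i + 1 + 1) - g (i + 1))
        = - ∑ i ∈ Finset.Icc (a - 1) (b - 1), (g (i + 1) - g (i + 1 + 1)) := by
      rw [← Finset.sum_neg_distrib]
      exact Finset.sum_congr rfl fun _ _ => by ring
    rw [hn, ht]; ring
  have hR : ∑ x ∈ Finset.Icc (a - 1) (b - 1), (g (x + 2) - g (x + 2 - 1)) * (D (x + 2 - 1) - I)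
      = ∑ x ∈ Finset.Icc (a - 1) (b - 1),
          ((g (x + 1 + 1) - g (x + 1)) * D (x + 1) - (g (x + 1 + 1) - g (x + 1)) * I) := by
    apply Finset.sum_congr rfl
    intro x _
    have e4 : x + 2 - 1 = x + 1 := by ring
    have e5 : x + 2 = x + 1 + 1 := by ring
    rw [e4, e5]; ring
  rw [hR, Finset.sum_sub_distrib, ← Finset.sum_mul, ht2, e3]
  have hcong : ∑ i ∈ Finset.Icc (a - 1) (b - 1),
      ((fun i => -g (i + 1)) i - (fun i => -g (i + 1)) (i + 1)) * D (i + 1)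
      = ∑ i ∈ Finset.Icc (a - 1) (b - 1), (g (i + 1 + 1) - g (i + 1)) * D (i + 1) :=
    Finset.sum_congr rfl fun _ _ => by simp only []; ring
  rw [hcong]
  ring

/-! ### The window, restriction map, and weights -/

section
variable (r θv : ℤ → ℝ) (a b : ℤ)

noncomputable def Sab : Finset ℤ := Finset.Icc (a - 1) (b + 1)

abbrev Cfg := (↥(Sab a b) → ℤ)

noncomputable def extc (c : Cfg a b) : ℤ → ℤ := fun j => if h : j ∈ Sab a b then c ⟨j, h⟩ else 0

def prj (ω : ℤ → ℤ) : Cfg a b := fun i => ω ↑i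

noncomputable def wt (c : Cfg a b) : ℝ := ∏ i : ↥(Sab a b), mu r (θv ↑i) (c i)

lemma measurable_prj : Measurable (prj a b) := by
  unfold prj
  exact measurable_pi_lambda _ fun i => measurable_pi_apply _

variable {r θv a b}

lemma mem_Sab {l : ℤ} (h1 : a ≤ l) (h2 : l ≤ b) : l ∈ Sab a b := by
  simp only [Sab, Finset.mem_Icc]; omega

lemma wt_nonneg (hpos : ∀ z : ℤ, 0 < r z) (c : Cfg a b) : 0 ≤ wt r θv a b c :=
  Finset.prod_nonneg fun i _ => mu_nonneg' hpos _ _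

lemma extc_mem {c : Cfg a b} {j : ℤ} (hj : j ∈ Sab a b) : extc a b c j = c ⟨j, hj⟩ := by
  simp [extc, hj]

lemma extc_not_mem {c : Cfg a b} {j : ℤ} (hj : ¬ j ∈ Sab a b) : extc a b c j = 0 := by
  simp [extc, hj]

variable {P : Measure (ℤ → ℤ)}

lemma Q_singleton (hpos : ∀ z : ℤ, 0 < r z) (hP : IsProductMeasure r θv P) (c : Cfg a b) :
    (P.map (prj a b)) {c} = ENNReal.ofReal (wt r θv a b c) := by
  rw [Measure.map_apply (measurable_prj a b) (measurableSet_singleton c)]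
  have hset : prj a b ⁻¹' {c} = {ω : ℤ → ℤ | ∀ i ∈ Sab a b, ω i = extc a b c i} := by
    ext ω
    simp only [Set.mem_preimage, Set.mem_singleton_iff, Set.mem_setOf_eq, funext_iff]
    constructor
    · intro h i hi
      rw [extc_mem hi]
      exact h ⟨i, hi⟩
    · intro h i
      rw [prj]
      rw [h ↑i i.2, extc_mem i.2]
  rw [hset, hP.2 (Sab a b) (extc a b c)]
  rw [← Finset.prod_coe_sort]
  rw [wt, ENNReal.ofReal_prod_of_nonneg fun i _ => mu_nonneg' hpos _ _]
  apply Finset.prod_congr rfl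
  intro i _
  rw [extc_mem i.2]

lemma summable_wt (hpos : ∀ z : ℤ, 0 < r z) (hP : IsProductMeasure r θv P) :
    Summable (wt r θv a b) := by
  haveI := hP.1
  haveI : IsProbabilityMeasure (P.map (prj a b)) :=
    Measure.isProbabilityMeasure_map (measurable_prj a b).aemeasurable
  have htsum : ∑' c : Cfg a b, (P.map (prj a b)) {c} = 1 := by
    rw [← measure_iUnion (fun c c' hcc => by simp [Function.onFun, hcc])
      (fun c => measurableSet_singleton c)]
    · rw [Set.iUnion_of_singleton]
      exact measure_univ
  have h2 : ∑' c : Cfg a b, ENNReal.ofReal (wt r θv a b c) = 1 := by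
    rw [← htsum]
    exact tsum_congr fun c => (Q_singleton hpos hP c).symm
  have h3 := ENNReal.summable_toReal (f := fun c : Cfg a b => ENNReal.ofReal (wt r θv a b c))
    (by rw [h2]; exact ENNReal.one_ne_top)
  refine h3.congr fun c => ?_
  exact ENNReal.toReal_ofReal (wt_nonneg hpos c)

/-- Master lemma: a function of the window coordinates is integrable and integrates to a
weighted sum, as soon as the weighted sum converges absolutely. -/
lemma master (hpos : ∀ z : ℤ, 0 < r z) (hP : IsProductMeasure r θv P)
    (F : (ℤ → ℤ) → ℝ)
    (hF : ∀ ω ω' : ℤ → ℤ, (∀ j ∈ Sab a b, ω j = ω' j) → F ω = F ω')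
    (hsum : Summable fun c : Cfg a b => |F (extc a b c)| * wt r θv a b c) :
    Integrable F P ∧
      ∫ ω, F ω ∂P = ∑' c : Cfg a b, F (extc a b c) * wt r θv a b c := by
  set G : Cfg a b → ℝ := fun c => F (extc a b c) with hG
  have hfac : ∀ ω, F ω = G (prj a b ω) := by
    intro ω
    apply hF
    intro j hj
    rw [extc_mem hj]
    rfl
  have hGmeas : Measurable G := measurable_of_countable _
  have hπ : Measurable (prj a b) := measurable_prj a b
  have hQint : Integrable G (P.map (prj a b)) := by
    refine ⟨hGmeas.aestronglyMeasurable, ?_⟩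
    rw [HasFiniteIntegral, lintegral_countable']
    have heq : ∀ c : Cfg a b, ‖G c‖ₑ * (P.map (prj a b)) {c}
        = ENNReal.ofReal (|G c| * wt r θv a b c) := by
      intro c
      rw [Q_singleton hpos hP c,
        ENNReal.ofReal_mul (abs_nonneg _), ← Real.enorm_eq_ofReal_abs]
    rw [tsum_congr heq, ← ENNReal.ofReal_tsum_of_nonneg
      (fun c => mul_nonneg (abs_nonneg _) (wt_nonneg hpos c)) hsum]
    exact ENNReal.ofReal_lt_top
  have hint : Integrable F P := by
    have := (integrable_map_measure hGmeas.aestronglyMeasurable hπ.aemeasurable).mp hQint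
    exact this.congr (Filter.Eventually.of_forall fun ω => (hfac ω).symm)
  refine ⟨hint, ?_⟩
  have h1 : ∫ ω, F ω ∂P = ∫ ω, G (prj a b ω) ∂P :=
    integral_congr_ae (Filter.Eventually.of_forall hfac)
  rw [h1, ← integral_map hπ.aemeasurable hGmeas.aestronglyMeasurable,
    integral_countable' hQint]
  apply tsum_congr
  intro c
  rw [measureReal_def, Q_singleton hpos hP c, ENNReal.toReal_ofReal (wt_nonneg hpos c)]
  rw [smul_eq_mul, mul_comm]

/-- Master lemma for bounded window functions. -/
lemma master_bdd (hpos : ∀ z : ℤ, 0 < r z) (hP : IsProductMeasure r θv P)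
    (F : (ℤ → ℤ) → ℝ)
    (hF : ∀ ω ω' : ℤ → ℤ, (∀ j ∈ Sab a b, ω j = ω' j) → F ω = F ω')
    (M : ℝ) (hM : ∀ ω, |F ω| ≤ M) :
    Integrable F P ∧
      ∫ ω, F ω ∂P = ∑' c : Cfg a b, F (extc a b c) * wt r θv a b c := by
  apply master hpos hP F hF
  apply Summable.of_nonneg_of_le
    (fun c => mul_nonneg (abs_nonneg _) (wt_nonneg hpos c))
    (fun c => mul_le_mul_of_nonneg_right (hM _) (wt_nonneg hpos c))
  exact (summable_wt hpos hP).mul_left M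

end
end GenId

namespace GenId
section
variable {r θv : ℤ → ℝ} {a b : ℤ}

def upd (k : ↥(Sab a b)) : Cfg a b ≃ Cfg a b where
  toFun c := Function.update c k (c k + 1)
  invFun c := Function.update c k (c k - 1)
  left_inv c := by
    funext j
    rcases eq_or_ne j k with h | h
    · subst h; simp
    · simp [Function.update_of_ne h]
  right_inv c := by
    funext j
    rcases eq_or_ne j k with h | h
    · subst h; simp
    · simp [Function.update_of_ne h]

lemma upd_self (k : ↥(Sab a b)) (c : Cfg a b) : upd k c k = c k + 1 := by
  simp [upd]

lemma upd_ne (k : ↥(Sab a b)) (c : Cfg a b) {j : ↥(Sab a b)} (h : j ≠ k) :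
    upd k c j = c j := by
  simp [upd, Function.update_of_ne h]

lemma upd_symm_self (k : ↥(Sab a b)) (c : Cfg a b) : (upd k).symm c k = c k - 1 := by
  simp [upd]

lemma upd_symm_ne (k : ↥(Sab a b)) (c : Cfg a b) {j : ↥(Sab a b)} (h : j ≠ k) :
    (upd k).symm c j = c j := by
  simp [upd, Function.update_of_ne h]

lemma wt_split (k : ↥(Sab a b)) (c : Cfg a b) :
    wt r θv a b c = mu r (θv ↑k) (c k) * ∏ j ∈ Finset.univ.erase k, mu r (θv ↑j) (c j) := by
  rw [wt, ← Finset.mul_prod_erase Finset.univ _ (Finset.mem_univ k)]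

lemma wt_upd (hpos : ∀ z : ℤ, 0 < r z) (hrel : ∀ z : ℤ, r z * r (-z + 1) = 1)
    (k : ↥(Sab a b)) (c : Cfg a b) :
    r (c k + 1) * wt r θv a b (upd k c) = Real.exp (θv ↑k) * wt r θv a b c := by
  rw [wt_split k (upd k c), wt_split k c, upd_self]
  have hprod : ∏ j ∈ Finset.univ.erase k, mu r (θv ↑j) (upd k c j)
      = ∏ j ∈ Finset.univ.erase k, mu r (θv ↑j) (c j) := by
    apply Finset.prod_congr rfl
    intro j hj
    rw [upd_ne k c (Finset.ne_of_mem_erase hj)]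
  rw [hprod, ← mul_assoc, ← mul_assoc, mu_up' hpos hrel]

lemma wt_r (hpos : ∀ z : ℤ, 0 < r z) (hrel : ∀ z : ℤ, r z * r (-z + 1) = 1)
    (k : ↥(Sab a b)) (c : Cfg a b) :
    r (c k) * wt r θv a b c = Real.exp (θv ↑k) * wt r θv a b ((upd k).symm c) := by
  have h := wt_upd (θv := θv) hpos hrel k ((upd k).symm c)
  rw [upd_symm_self, Equiv.apply_symm_apply] at h
  have e : c k - 1 + 1 = c k := by ring
  rw [e] at h
  exact h

lemma wt_down (hpos : ∀ z : ℤ, 0 < r z) (hrel : ∀ z : ℤ, r z * r (-z + 1) = 1)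
    (k : ↥(Sab a b)) (c : Cfg a b) :
    r (-(c k) + 1) * wt r θv a b ((upd k).symm c)
      = Real.exp (-(θv ↑k)) * wt r θv a b c := by
  rw [wt_split k ((upd k).symm c), wt_split k c, upd_symm_self]
  have hprod : ∏ j ∈ Finset.univ.erase k, mu r (θv ↑j) ((upd k).symm c j)
      = ∏ j ∈ Finset.univ.erase k, mu r (θv ↑j) (c j) := by
    apply Finset.prod_congr rfl
    intro j hj
    rw [upd_symm_ne k c (Finset.ne_of_mem_erase hj)]
  rw [hprod, ← mul_assoc, ← mul_assoc, mu_down' hpos hrel]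

lemma wt_rneg (hpos : ∀ z : ℤ, 0 < r z) (hrel : ∀ z : ℤ, r z * r (-z + 1) = 1)
    (k : ↥(Sab a b)) (c : Cfg a b) :
    r (-(c k)) * wt r θv a b c = Real.exp (-(θv ↑k)) * wt r θv a b (upd k c) := by
  have h := wt_down (θv := θv) hpos hrel k (upd k c)
  rw [upd_self, Equiv.symm_apply_apply] at h
  have e : -(c k + 1) + 1 = -(c k) := by ring
  rw [e] at h
  exact h

-- extension/update compatibility
lemma ext_upd (c : Cfg a b) {j : ℤ} (hj : j ∈ Sab a b) :
    extc a b (upd ⟨j, hj⟩ c) = upCfg (extc a b c) j := by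
  funext l
  rcases eq_or_ne l j with h | h
  · subst h
    rw [extc_mem hj, upCfg, Function.update_self, extc_mem hj]
    exact upd_self _ c
  · have hne : ∀ (hl : l ∈ Sab a b), (⟨l, hl⟩ : ↥(Sab a b)) ≠ ⟨j, hj⟩ := by
      intro hl hcon
      exact h (congrArg Subtype.val hcon)
    rw [upCfg, Function.update_of_ne h]
    by_cases hl : l ∈ Sab a b
    · rw [extc_mem hl, extc_mem hl]
      exact upd_ne _ c (hne hl)
    · rw [extc_not_mem hl, extc_not_mem hl]

lemma ext_upd_symm (c : Cfg a b) {j : ℤ} (hj : j ∈ Sab a b) :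
    extc a b ((upd ⟨j, hj⟩).symm c) = downCfg (extc a b c) j := by
  funext l
  rcases eq_or_ne l j with h | h
  · subst h
    rw [extc_mem hj, downCfg, Function.update_self, extc_mem hj]
    exact upd_symm_self _ c
  · have hne : ∀ (hl : l ∈ Sab a b), (⟨l, hl⟩ : ↥(Sab a b)) ≠ ⟨j, hj⟩ := by
      intro hl hcon
      exact h (congrArg Subtype.val hcon)
    rw [downCfg, Function.update_of_ne h]
    by_cases hl : l ∈ Sab a b
    · rw [extc_mem hl, extc_mem hl]
      exact upd_symm_ne _ c (hne hl)
    · rw [extc_not_mem hl, extc_not_mem hl]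

lemma brick_ext_upd (c : Cfg a b) {i : ℤ} (hi1 : i ∈ Sab a b) (hi2 : i + 1 ∈ Sab a b) :
    brickCfg (extc a b (upd ⟨i, hi1⟩ c)) i = upCfg (extc a b c) (i + 1) := by
  rw [ext_upd c hi1]
  funext l
  simp only [brickCfg, upCfg, Function.update_apply]
  split_ifs <;> (try subst_vars) <;> omega

lemma brick_ext_downsymm (c : Cfg a b) {i : ℤ} (hi1 : i ∈ Sab a b) (hi2 : i + 1 ∈ Sab a b) :
    brickCfg (extc a b ((upd ⟨i + 1, hi2⟩).symm c)) i = downCfg (extc a b c) i := by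
  rw [ext_upd_symm c hi2]
  funext l
  simp only [brickCfg, downCfg, Function.update_apply]
  split_ifs <;> (try subst_vars) <;> omega


end
end GenId


namespace GenId
section
variable {r θv : ℤ → ℝ} {P : Measure (ℤ → ℤ)} {a b : ℤ} {φ : (ℤ → ℤ) → ℝ} {M : ℝ}

lemma win_id (hdep : ∀ ω ω' : ℤ → ℤ, (∀ l : ℤ, a ≤ l → l ≤ b → ω l = ω' l) → φ ω = φ ω') :
    ∀ ω ω' : ℤ → ℤ, (∀ j ∈ Sab a b, ω j = ω' j) → φ ω = φ ω' := fun ω ω' h =>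
  hdep ω ω' fun l h1 h2 => h l (mem_Sab h1 h2)

lemma win_up (hdep : ∀ ω ω' : ℤ → ℤ, (∀ l : ℤ, a ≤ l → l ≤ b → ω l = ω' l) → φ ω = φ ω')
    (j : ℤ) :
    ∀ ω ω' : ℤ → ℤ, (∀ l ∈ Sab a b, ω l = ω' l) → φ (upCfg ω j) = φ (upCfg ω' j) := by
  intro ω ω' h
  apply hdep
  intro l h1 h2
  have hS := mem_Sab (a := a) (b := b) h1 h2
  simp only [upCfg, Function.update_apply]
  split_ifs with hl
  · subst hl; rw [h l hS]
  · exact h l hS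

lemma win_down (hdep : ∀ ω ω' : ℤ → ℤ, (∀ l : ℤ, a ≤ l → l ≤ b → ω l = ω' l) → φ ω = φ ω')
    (j : ℤ) :
    ∀ ω ω' : ℤ → ℤ, (∀ l ∈ Sab a b, ω l = ω' l) → φ (downCfg ω j) = φ (downCfg ω' j) := by
  intro ω ω' h
  apply hdep
  intro l h1 h2
  have hS := mem_Sab (a := a) (b := b) h1 h2
  simp only [downCfg, Function.update_apply]
  split_ifs with hl
  · subst hl; rw [h l hS]
  · exact h l hS

lemma win_brick (hdep : ∀ ω ω' : ℤ → ℤ, (∀ l : ℤ, a ≤ l → l ≤ b → ω l = ω' l) → φ ω = φ ω')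
    {i : ℤ} (hik : i ∈ Sab a b) (hik2 : i + 1 ∈ Sab a b) :
    ∀ ω ω' : ℤ → ℤ, (∀ l ∈ Sab a b, ω l = ω' l) → φ (brickCfg ω i) = φ (brickCfg ω' i) := by
  intro ω ω' h
  apply hdep
  intro l h1 h2
  simp only [brickCfg]
  split_ifs with hl1 hl2
  · rw [h i hik]
  · rw [h (i + 1) hik2]
  · exact h l (mem_Sab h1 h2)

lemma claim1 (hpos : ∀ z : ℤ, 0 < r z) (hrel : ∀ z : ℤ, r z * r (-z + 1) = 1)
    (hP : IsProductMeasure r θv P) (hM : ∀ ω, |φ ω| ≤ M)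
    (hdep : ∀ ω ω' : ℤ → ℤ, (∀ l : ℤ, a ≤ l → l ≤ b → ω l = ω' l) → φ ω = φ ω')
    {i : ℤ} (hik : i ∈ Sab a b) (hik2 : i + 1 ∈ Sab a b) :
    Integrable (fun ω : ℤ → ℤ => r (ω i) * φ (brickCfg ω i)) P ∧
      ∫ ω, r (ω i) * φ (brickCfg ω i) ∂P
        = Real.exp (θv i) * ∫ ω, φ (upCfg ω (i + 1)) ∂P := by
  have hwin1 : ∀ ω ω' : ℤ → ℤ, (∀ j ∈ Sab a b, ω j = ω' j) →
      r (ω i) * φ (brickCfg ω i) = r (ω' i) * φ (brickCfg ω' i) := by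
    intro ω ω' h
    rw [h i hik, win_brick hdep hik hik2 ω ω' h]
  have hup := master_bdd hpos hP (fun ω => φ (upCfg ω (i + 1)))
    (win_up hdep (i + 1)) M (fun ω => hM _)
  have hsum1 : Summable (fun c : Cfg a b =>
      |r (extc a b c i) * φ (brickCfg (extc a b c) i)| * wt r θv a b c) := by
    apply Summable.of_nonneg_of_le
      (fun c => mul_nonneg (abs_nonneg _) (wt_nonneg hpos c)) ?_
      ((((upd (⟨i, hik⟩ : ↥(Sab a b))).symm.summable_iff.mpr
        (summable_wt hpos hP)).mul_left (M * Real.exp (θv i))))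
    intro c
    rw [extc_mem hik, abs_mul, abs_of_pos (hpos _)]
    calc r (c ⟨i, hik⟩) * |φ (brickCfg (extc a b c) i)| * wt r θv a b c
        ≤ r (c ⟨i, hik⟩) * M * wt r θv a b c :=
          mul_le_mul_of_nonneg_right
            (mul_le_mul_of_nonneg_left (hM _) (hpos _).le) (wt_nonneg hpos c)
      _ = M * (r (c ⟨i, hik⟩) * wt r θv a b c) := by ring
      _ = M * (Real.exp (θv i) * wt r θv a b ((upd ⟨i, hik⟩).symm c)) := by
          rw [wt_r hpos hrel]
      _ = (M * Real.exp (θv i)) * wt r θv a b ((upd ⟨i, hik⟩).symm c) := by ring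
  obtain ⟨hint1, hval1⟩ := master hpos hP (fun ω : ℤ → ℤ => r (ω i) * φ (brickCfg ω i))
    hwin1 hsum1
  refine ⟨hint1, ?_⟩
  have hhh : ∑' c : Cfg a b, r (extc a b c i) * φ (brickCfg (extc a b c) i) * wt r θv a b c
      = ∑' c : Cfg a b, r (extc a b (upd ⟨i, hik⟩ c) i)
          * φ (brickCfg (extc a b (upd ⟨i, hik⟩ c)) i) * wt r θv a b (upd ⟨i, hik⟩ c) :=
    (Equiv.tsum_eq (upd ⟨i, hik⟩) (fun c : Cfg a b =>
      r (extc a b c i) * φ (brickCfg (extc a b c) i) * wt r θv a b c)).symm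
  rw [hval1, hhh, hup.2, ← tsum_mul_left]
  apply tsum_congr
  intro c
  have e1 : extc a b (upd ⟨i, hik⟩ c) i = c ⟨i, hik⟩ + 1 := by
    rw [extc_mem hik]
    exact upd_self _ c
  rw [e1, brick_ext_upd c hik hik2]
  have e2 := wt_upd (θv := θv) hpos hrel (⟨i, hik⟩ : ↥(Sab a b)) c
  calc r (c ⟨i, hik⟩ + 1) * φ (upCfg (extc a b c) (i + 1)) * wt r θv a b (upd ⟨i, hik⟩ c)
      = φ (upCfg (extc a b c) (i + 1))
          * (r (c ⟨i, hik⟩ + 1) * wt r θv a b (upd ⟨i, hik⟩ c)) := by ring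
    _ = φ (upCfg (extc a b c) (i + 1)) * (Real.exp (θv i) * wt r θv a b c) := by rw [e2]
    _ = Real.exp (θv i) * (φ (upCfg (extc a b c) (i + 1)) * wt r θv a b c) := by ring

lemma claim2 (hpos : ∀ z : ℤ, 0 < r z) (hrel : ∀ z : ℤ, r z * r (-z + 1) = 1)
    (hP : IsProductMeasure r θv P) (hM : ∀ ω, |φ ω| ≤ M)
    (hdep : ∀ ω ω' : ℤ → ℤ, (∀ l : ℤ, a ≤ l → l ≤ b → ω l = ω' l) → φ ω = φ ω')
    {i : ℤ} (hik : i ∈ Sab a b) :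
    Integrable (fun ω : ℤ → ℤ => r (ω i) * φ ω) P ∧
      ∫ ω, r (ω i) * φ ω ∂P = Real.exp (θv i) * ∫ ω, φ (upCfg ω i) ∂P := by
  have hwin1 : ∀ ω ω' : ℤ → ℤ, (∀ j ∈ Sab a b, ω j = ω' j) →
      r (ω i) * φ ω = r (ω' i) * φ ω' := by
    intro ω ω' h
    rw [h i hik, win_id hdep ω ω' h]
  have hup := master_bdd hpos hP (fun ω => φ (upCfg ω i)) (win_up hdep i) M (fun ω => hM _)
  have hsum1 : Summable (fun c : Cfg a b => |r (extc a b c i) * φ (extc a b c)| * wt r θv a b c) := by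
    apply Summable.of_nonneg_of_le
      (fun c => mul_nonneg (abs_nonneg _) (wt_nonneg hpos c)) ?_
      ((((upd (⟨i, hik⟩ : ↥(Sab a b))).symm.summable_iff.mpr
        (summable_wt hpos hP)).mul_left (M * Real.exp (θv i))))
    intro c
    rw [extc_mem hik, abs_mul, abs_of_pos (hpos _)]
    calc r (c ⟨i, hik⟩) * |φ (extc a b c)| * wt r θv a b c
        ≤ r (c ⟨i, hik⟩) * M * wt r θv a b c :=
          mul_le_mul_of_nonneg_right
            (mul_le_mul_of_nonneg_left (hM _) (hpos _).le) (wt_nonneg hpos c)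
      _ = M * (r (c ⟨i, hik⟩) * wt r θv a b c) := by ring
      _ = M * (Real.exp (θv i) * wt r θv a b ((upd ⟨i, hik⟩).symm c)) := by
          rw [wt_r hpos hrel]
      _ = (M * Real.exp (θv i)) * wt r θv a b ((upd ⟨i, hik⟩).symm c) := by ring
  obtain ⟨hint1, hval1⟩ := master hpos hP (fun ω : ℤ → ℤ => r (ω i) * φ ω) hwin1 hsum1
  refine ⟨hint1, ?_⟩
  have hhh : ∑' c : Cfg a b, r (extc a b c i) * φ (extc a b c) * wt r θv a b c
      = ∑' c : Cfg a b, r (extc a b (upd ⟨i, hik⟩ c) i)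
          * φ (extc a b (upd ⟨i, hik⟩ c)) * wt r θv a b (upd ⟨i, hik⟩ c) :=
    (Equiv.tsum_eq (upd ⟨i, hik⟩) (fun c : Cfg a b =>
      r (extc a b c i) * φ (extc a b c) * wt r θv a b c)).symm
  rw [hval1, hhh, hup.2, ← tsum_mul_left]
  apply tsum_congr
  intro c
  have e1 : extc a b (upd ⟨i, hik⟩ c) i = c ⟨i, hik⟩ + 1 := by
    rw [extc_mem hik]
    exact upd_self _ c
  rw [e1, ext_upd c hik]
  have e2 := wt_upd (θv := θv) hpos hrel (⟨i, hik⟩ : ↥(Sab a b)) c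
  calc r (c ⟨i, hik⟩ + 1) * φ (upCfg (extc a b c) i) * wt r θv a b (upd ⟨i, hik⟩ c)
      = φ (upCfg (extc a b c) i)
          * (r (c ⟨i, hik⟩ + 1) * wt r θv a b (upd ⟨i, hik⟩ c)) := by ring
    _ = φ (upCfg (extc a b c) i) * (Real.exp (θv i) * wt r θv a b c) := by rw [e2]
    _ = Real.exp (θv i) * (φ (upCfg (extc a b c) i) * wt r θv a b c) := by ring

lemma claim3 (hpos : ∀ z : ℤ, 0 < r z) (hrel : ∀ z : ℤ, r z * r (-z + 1) = 1)
    (hP : IsProductMeasure r θv P) (hM : ∀ ω, |φ ω| ≤ M)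
    (hdep : ∀ ω ω' : ℤ → ℤ, (∀ l : ℤ, a ≤ l → l ≤ b → ω l = ω' l) → φ ω = φ ω')
    {i : ℤ} (hik : i ∈ Sab a b) (hik2 : i + 1 ∈ Sab a b) :
    Integrable (fun ω : ℤ → ℤ => r (-(ω (i + 1))) * φ (brickCfg ω i)) P ∧
      ∫ ω, r (-(ω (i + 1))) * φ (brickCfg ω i) ∂P
        = Real.exp (-(θv (i + 1))) * ∫ ω, φ (downCfg ω i) ∂P := by
  have hwin1 : ∀ ω ω' : ℤ → ℤ, (∀ j ∈ Sab a b, ω j = ω' j) →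
      r (-(ω (i + 1))) * φ (brickCfg ω i) = r (-(ω' (i + 1))) * φ (brickCfg ω' i) := by
    intro ω ω' h
    rw [h (i + 1) hik2, win_brick hdep hik hik2 ω ω' h]
  have hup := master_bdd hpos hP (fun ω => φ (downCfg ω i)) (win_down hdep i) M (fun ω => hM _)
  have hsum1 : Summable (fun c : Cfg a b =>
      |r (-(extc a b c (i + 1))) * φ (brickCfg (extc a b c) i)| * wt r θv a b c) := by
    apply Summable.of_nonneg_of_le
      (fun c => mul_nonneg (abs_nonneg _) (wt_nonneg hpos c)) ?_
      ((((upd (⟨i + 1, hik2⟩ : ↥(Sab a b))).summable_iff.mpr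
        (summable_wt hpos hP)).mul_left (M * Real.exp (-(θv (i + 1))))))
    intro c
    rw [extc_mem hik2, abs_mul, abs_of_pos (hpos _)]
    calc r (-(c ⟨i + 1, hik2⟩)) * |φ (brickCfg (extc a b c) i)| * wt r θv a b c
        ≤ r (-(c ⟨i + 1, hik2⟩)) * M * wt r θv a b c :=
          mul_le_mul_of_nonneg_right
            (mul_le_mul_of_nonneg_left (hM _) (hpos _).le) (wt_nonneg hpos c)
      _ = M * (r (-(c ⟨i + 1, hik2⟩)) * wt r θv a b c) := by ring
      _ = M * (Real.exp (-(θv (i + 1))) * wt r θv a b (upd ⟨i + 1, hik2⟩ c)) := by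
          rw [wt_rneg hpos hrel]
      _ = (M * Real.exp (-(θv (i + 1)))) * wt r θv a b (upd ⟨i + 1, hik2⟩ c) := by ring
  obtain ⟨hint1, hval1⟩ := master hpos hP
    (fun ω : ℤ → ℤ => r (-(ω (i + 1))) * φ (brickCfg ω i)) hwin1 hsum1
  refine ⟨hint1, ?_⟩
  have hhh : ∑' c : Cfg a b,
        r (-(extc a b c (i + 1))) * φ (brickCfg (extc a b c) i) * wt r θv a b c
      = ∑' c : Cfg a b, r (-(extc a b ((upd ⟨i + 1, hik2⟩).symm c) (i + 1)))
          * φ (brickCfg (extc a b ((upd ⟨i + 1, hik2⟩).symm c)) i)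
          * wt r θv a b ((upd ⟨i + 1, hik2⟩).symm c) :=
    (Equiv.tsum_eq (upd ⟨i + 1, hik2⟩).symm (fun c : Cfg a b =>
      r (-(extc a b c (i + 1))) * φ (brickCfg (extc a b c) i) * wt r θv a b c)).symm
  rw [hval1, hhh, hup.2, ← tsum_mul_left]
  apply tsum_congr
  intro c
  have e1 : extc a b ((upd ⟨i + 1, hik2⟩).symm c) (i + 1) = c ⟨i + 1, hik2⟩ - 1 := by
    rw [extc_mem hik2]
    exact upd_symm_self _ c
  rw [e1, brick_ext_downsymm c hik hik2]
  have e3 : -(c ⟨i + 1, hik2⟩ - 1) = -(c ⟨i + 1, hik2⟩) + 1 := by ring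
  rw [e3]
  have e2 := wt_down (θv := θv) hpos hrel (⟨i + 1, hik2⟩ : ↥(Sab a b)) c
  calc r (-(c ⟨i + 1, hik2⟩) + 1) * φ (downCfg (extc a b c) i)
        * wt r θv a b ((upd ⟨i + 1, hik2⟩).symm c)
      = φ (downCfg (extc a b c) i) * (r (-(c ⟨i + 1, hik2⟩) + 1)
          * wt r θv a b ((upd ⟨i + 1, hik2⟩).symm c)) := by ring
    _ = φ (downCfg (extc a b c) i) * (Real.exp (-(θv (i + 1))) * wt r θv a b c) := by rw [e2]
    _ = Real.exp (-(θv (i + 1))) * (φ (downCfg (extc a b c) i) * wt r θv a b c) := by ring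

lemma claim4 (hpos : ∀ z : ℤ, 0 < r z) (hrel : ∀ z : ℤ, r z * r (-z + 1) = 1)
    (hP : IsProductMeasure r θv P) (hM : ∀ ω, |φ ω| ≤ M)
    (hdep : ∀ ω ω' : ℤ → ℤ, (∀ l : ℤ, a ≤ l → l ≤ b → ω l = ω' l) → φ ω = φ ω')
    {i : ℤ} (hik2 : i + 1 ∈ Sab a b) :
    Integrable (fun ω : ℤ → ℤ => r (-(ω (i + 1))) * φ ω) P ∧
      ∫ ω, r (-(ω (i + 1))) * φ ω ∂P
        = Real.exp (-(θv (i + 1))) * ∫ ω, φ (downCfg ω (i + 1)) ∂P := by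
  have hwin1 : ∀ ω ω' : ℤ → ℤ, (∀ j ∈ Sab a b, ω j = ω' j) →
      r (-(ω (i + 1))) * φ ω = r (-(ω' (i + 1))) * φ ω' := by
    intro ω ω' h
    rw [h (i + 1) hik2, win_id hdep ω ω' h]
  have hup := master_bdd hpos hP (fun ω => φ (downCfg ω (i + 1)))
    (win_down hdep (i + 1)) M (fun ω => hM _)
  have hsum1 : Summable (fun c : Cfg a b =>
      |r (-(extc a b c (i + 1))) * φ (extc a b c)| * wt r θv a b c) := by
    apply Summable.of_nonneg_of_le
      (fun c => mul_nonneg (abs_nonneg _) (wt_nonneg hpos c)) ?_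
      ((((upd (⟨i + 1, hik2⟩ : ↥(Sab a b))).summable_iff.mpr
        (summable_wt hpos hP)).mul_left (M * Real.exp (-(θv (i + 1))))))
    intro c
    rw [extc_mem hik2, abs_mul, abs_of_pos (hpos _)]
    calc r (-(c ⟨i + 1, hik2⟩)) * |φ (extc a b c)| * wt r θv a b c
        ≤ r (-(c ⟨i + 1, hik2⟩)) * M * wt r θv a b c :=
          mul_le_mul_of_nonneg_right
            (mul_le_mul_of_nonneg_left (hM _) (hpos _).le) (wt_nonneg hpos c)
      _ = M * (r (-(c ⟨i + 1, hik2⟩)) * wt r θv a b c) := by ring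
      _ = M * (Real.exp (-(θv (i + 1))) * wt r θv a b (upd ⟨i + 1, hik2⟩ c)) := by
          rw [wt_rneg hpos hrel]
      _ = (M * Real.exp (-(θv (i + 1)))) * wt r θv a b (upd ⟨i + 1, hik2⟩ c) := by ring
  obtain ⟨hint1, hval1⟩ := master hpos hP
    (fun ω : ℤ → ℤ => r (-(ω (i + 1))) * φ ω) hwin1 hsum1
  refine ⟨hint1, ?_⟩
  have hhh : ∑' c : Cfg a b, r (-(extc a b c (i + 1))) * φ (extc a b c) * wt r θv a b c
      = ∑' c : Cfg a b, r (-(extc a b ((upd ⟨i + 1, hik2⟩).symm c) (i + 1)))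
          * φ (extc a b ((upd ⟨i + 1, hik2⟩).symm c))
          * wt r θv a b ((upd ⟨i + 1, hik2⟩).symm c) :=
    (Equiv.tsum_eq (upd ⟨i + 1, hik2⟩).symm (fun c : Cfg a b =>
      r (-(extc a b c (i + 1))) * φ (extc a b c) * wt r θv a b c)).symm
  rw [hval1, hhh, hup.2, ← tsum_mul_left]
  apply tsum_congr
  intro c
  have e1 : extc a b ((upd ⟨i + 1, hik2⟩).symm c) (i + 1) = c ⟨i + 1, hik2⟩ - 1 := by
    rw [extc_mem hik2]
    exact upd_symm_self _ c
  rw [e1, ext_upd_symm c hik2]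
  have e3 : -(c ⟨i + 1, hik2⟩ - 1) = -(c ⟨i + 1, hik2⟩) + 1 := by ring
  rw [e3]
  have e2 := wt_down (θv := θv) hpos hrel (⟨i + 1, hik2⟩ : ↥(Sab a b)) c
  calc r (-(c ⟨i + 1, hik2⟩) + 1) * φ (downCfg (extc a b c) (i + 1))
        * wt r θv a b ((upd ⟨i + 1, hik2⟩).symm c)
      = φ (downCfg (extc a b c) (i + 1)) * (r (-(c ⟨i + 1, hik2⟩) + 1)
          * wt r θv a b ((upd ⟨i + 1, hik2⟩).symm c)) := by ring
    _ = φ (downCfg (extc a b c) (i + 1))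
          * (Real.exp (-(θv (i + 1))) * wt r θv a b c) := by rw [e2]
    _ = Real.exp (-(θv (i + 1)))
          * (φ (downCfg (extc a b c) (i + 1)) * wt r θv a b c) := by ring

end
end GenId

theorem generator_identity (r : ℤ → ℝ) (hpos : ∀ z : ℤ, 0 < r z)
    (hrel : ∀ z : ℤ, r z * r (-z + 1) = 1)
    (θv : ℤ → ℝ) (hZ : ∀ i : ℤ, Summable (fun z : ℤ => Real.exp (θv i * z) / rfact r z))
    (P : Measure (ℤ → ℤ)) (hP : IsProductMeasure r θv P)
    (φ : (ℤ → ℤ) → ℝ) (hmeas : Measurable φ) (hbdd : ∃ M : ℝ, ∀ ω, |φ ω| ≤ M)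
    (a b : ℤ) (hab : a ≤ b)
    (hdep : ∀ ω ω' : ℤ → ℤ, (∀ i : ℤ, a ≤ i → i ≤ b → ω i = ω' i) → φ ω = φ ω') :
    (∀ i ∈ Finset.Icc (a - 1) b,
      Integrable (fun ω : ℤ → ℤ =>
        (r (ω i) + r (-(ω (i + 1)))) * (φ (brickCfg ω i) - φ ω)) P) ∧
    Integrable φ P ∧
    (∑ i ∈ Finset.Icc (a - 1) b,
        ∫ ω, (r (ω i) + r (-(ω (i + 1)))) * (φ (brickCfg ω i) - φ ω) ∂P)
      = (∑ i ∈ Finset.Icc (a - 1) (b - 1),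
          (Real.exp (θv i) - Real.exp (θv (i + 1))) *
            ((∫ ω, φ (upCfg ω (i + 1)) ∂P) - ∫ ω, φ ω ∂P))
        + ∑ i ∈ Finset.Icc (a + 1) (b + 1),
            (Real.exp (-θv i) - Real.exp (-θv (i - 1))) *
              ((∫ ω, φ (downCfg ω (i - 1)) ∂P) - ∫ ω, φ ω ∂P) := by
  classical
  obtain ⟨M, hM⟩ := hbdd
  have key : ∀ i ∈ Finset.Icc (a - 1) b,
      Integrable (fun ω : ℤ → ℤ =>
        (r (ω i) + r (-(ω (i + 1)))) * (φ (brickCfg ω i) - φ ω)) P ∧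
      ∫ ω, (r (ω i) + r (-(ω (i + 1)))) * (φ (brickCfg ω i) - φ ω) ∂P
        = Real.exp (θv i) *
            ((∫ ω, φ (upCfg ω (i + 1)) ∂P) - ∫ ω, φ (upCfg ω i) ∂P)
          + Real.exp (-θv (i + 1)) *
            ((∫ ω, φ (downCfg ω i) ∂P) - ∫ ω, φ (downCfg ω (i + 1)) ∂P) := by
    intro i hi
    have hik : i ∈ GenId.Sab a b := by
      simp only [GenId.Sab, Finset.mem_Icc] at *
      omega
    have hik2 : i + 1 ∈ GenId.Sab a b := by
      simp only [GenId.Sab, Finset.mem_Icc] at *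
      omega
    obtain ⟨h1i, h1v⟩ := GenId.claim1 hpos hrel hP hM hdep hik hik2
    obtain ⟨h2i, h2v⟩ := GenId.claim2 hpos hrel hP hM hdep hik
    obtain ⟨h3i, h3v⟩ := GenId.claim3 hpos hrel hP hM hdep hik hik2
    obtain ⟨h4i, h4v⟩ := GenId.claim4 hpos hrel hP hM hdep hik2
    have hfun : (fun ω : ℤ → ℤ =>
        (r (ω i) + r (-(ω (i + 1)))) * (φ (brickCfg ω i) - φ ω))
        = fun ω : ℤ → ℤ => (r (ω i) * φ (brickCfg ω i) - r (ω i) * φ ω)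
          + (r (-(ω (i + 1))) * φ (brickCfg ω i) - r (-(ω (i + 1))) * φ ω) := by
      funext ω; ring
    constructor
    · rw [hfun]; exact (h1i.sub h2i).add (h3i.sub h4i)
    · calc ∫ ω, (r (ω i) + r (-(ω (i + 1)))) * (φ (brickCfg ω i) - φ ω) ∂P
          = ∫ ω, ((r (ω i) * φ (brickCfg ω i) - r (ω i) * φ ω)
              + (r (-(ω (i + 1))) * φ (brickCfg ω i) - r (-(ω (i + 1))) * φ ω)) ∂P := by
            rw [hfun]
        _ = (∫ ω, (r (ω i) * φ (brickCfg ω i) - r (ω i) * φ ω) ∂P)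
            + ∫ ω, (r (-(ω (i + 1))) * φ (brickCfg ω i) - r (-(ω (i + 1))) * φ ω) ∂P :=
            integral_add (h1i.sub h2i) (h3i.sub h4i)
        _ = ((∫ ω, r (ω i) * φ (brickCfg ω i) ∂P) - ∫ ω, r (ω i) * φ ω ∂P)
            + ((∫ ω, r (-(ω (i + 1))) * φ (brickCfg ω i) ∂P)
              - ∫ ω, r (-(ω (i + 1))) * φ ω ∂P) := by
            rw [integral_sub h1i h2i, integral_sub h3i h4i]
        _ = _ := by
            rw [h1v, h2v, h3v, h4v]; ring_nf
  have hφ := GenId.master_bdd hpos hP φ (GenId.win_id hdep) M hM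
  refine ⟨fun i hi => (key i hi).1, hφ.1, ?_⟩
  have hUa : ∫ ω, φ (upCfg ω (a - 1)) ∂P = ∫ ω, φ ω ∂P := by
    apply integral_congr_ae
    apply Filter.Eventually.of_forall
    intro ω
    apply hdep
    intro l h1 h2
    simp only [upCfg]
    rw [Function.update_of_ne (by omega : l ≠ a - 1)]
  have hUb : ∫ ω, φ (upCfg ω (b + 1)) ∂P = ∫ ω, φ ω ∂P := by
    apply integral_congr_ae
    apply Filter.Eventually.of_forall
    intro ω
    apply hdep
    intro l h1 h2
    simp only [upCfg]
    rw [Function.update_of_ne (by omega : l ≠ b + 1)]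
  have hDa : ∫ ω, φ (downCfg ω (a - 1)) ∂P = ∫ ω, φ ω ∂P := by
    apply integral_congr_ae
    apply Filter.Eventually.of_forall
    intro ω
    apply hdep
    intro l h1 h2
    simp only [downCfg]
    rw [Function.update_of_ne (by omega : l ≠ a - 1)]
  have hDb : ∫ ω, φ (downCfg ω (b + 1)) ∂P = ∫ ω, φ ω ∂P := by
    apply integral_congr_ae
    apply Filter.Eventually.of_forall
    intro ω
    apply hdep
    intro l h1 h2
    simp only [downCfg]
    rw [Function.update_of_ne (by omega : l ≠ b + 1)]
  have HP1 := GenId.part1 a b hab (fun i => Real.exp (θv i))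
    (fun j => ∫ ω, φ (upCfg ω j) ∂P) (∫ ω, φ ω ∂P) hUa hUb
  have HP2 := GenId.part2 a b hab (fun i => Real.exp (-θv i))
    (fun j => ∫ ω, φ (downCfg ω j) ∂P) (∫ ω, φ ω ∂P) hDa hDb
  calc ∑ i ∈ Finset.Icc (a - 1) b,
        ∫ ω, (r (ω i) + r (-(ω (i + 1)))) * (φ (brickCfg ω i) - φ ω) ∂P
      = ∑ i ∈ Finset.Icc (a - 1) b,
          (Real.exp (θv i) *
            ((∫ ω, φ (upCfg ω (i + 1)) ∂P) - ∫ ω, φ (upCfg ω i) ∂P)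
          + Real.exp (-θv (i + 1)) *
            ((∫ ω, φ (downCfg ω i) ∂P) - ∫ ω, φ (downCfg ω (i + 1)) ∂P)) :=
        Finset.sum_congr rfl fun i hi => (key i hi).2
    _ = (∑ i ∈ Finset.Icc (a - 1) b, Real.exp (θv i) *
            ((∫ ω, φ (upCfg ω (i + 1)) ∂P) - ∫ ω, φ (upCfg ω i) ∂P))
        + ∑ i ∈ Finset.Icc (a - 1) b, Real.exp (-θv (i + 1)) *
            ((∫ ω, φ (downCfg ω i) ∂P) - ∫ ω, φ (downCfg ω (i + 1)) ∂P) :=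
        Finset.sum_add_distrib
    _ = _ := by rw [HP1, HP2]
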